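/- Let R be the valuation ring of a nontrivial discrete valuation of a field F with residue field K. Let A be an associative unital R-algebra which is free as an R-module, and let L be a field extension of F. If for every finite extension K' of K the algebra K' ⊗_R A has no zero divisors, then L ⊗_R A has no zero divisors. -/

import Mathlib

open scoped TensorProduct

universe u u' v w

section aux

variable {R : Type*} [CommRing R] {A : Type*} [Ring A] [Algebra R A]
variable {ι : Type*}

theorem auxMap {S T : Type*} [CommRing S] [CommRing T] [Algebra R S] [Algebra R T]
    (g : S →ₐ[R] T) (t : Finset ι) (c : ι → S) (e : ι → A) :
    Algebra.TensorProduct.map g (AlgHom.id R A) (∑ i ∈ t, c i ⊗ₜ[R] e i)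
      = ∑ i ∈ t, g (c i) ⊗ₜ[R] e i := by
  rw [map_sum]; exact Finset.sum_congr rfl fun i _ => by simp

theorem auxInj {S T : Type*} [CommRing S] [CommRing T] [Algebra R S] [Algebra R T]
    [Module.Flat R A] (g : S →ₐ[R] T) (hg : Function.Injective g) :
    Function.Injective (Algebra.TensorProduct.map g (AlgHom.id R A)) := by
  have h1 : (Algebra.TensorProduct.map g (AlgHom.id R A)).toLinearMap
      = LinearMap.rTensor A g.toLinearMap := TensorProduct.ext' fun s a => by simp
  have h2 := Module.Flat.rTensor_preserves_injective_linearMap (M := A) g.toLinearMap hg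
  intro u v huv
  apply h2
  have : (Algebra.TensorProduct.map g (AlgHom.id R A)).toLinearMap u
      = (Algebra.TensorProduct.map g (AlgHom.id R A)).toLinearMap v := huv
  rwa [h1] at this

theorem auxCoeff (b : Module.Basis ι R A) {S : Type*} [CommRing S] [Algebra R S] (t : Finset ι)
    (c : ι → S) {i₀ : ι} (hi₀ : i₀ ∈ t) (hsum : ∑ i ∈ t, c i ⊗ₜ[R] b i = 0) : c i₀ = 0 := by
  have H := congrArg (fun z => (TensorProduct.rid R S) ((LinearMap.lTensor S (b.coord i₀)) z)) hsum
  simp only [map_sum, LinearMap.lTensor_tmul, TensorProduct.rid_tmul, map_zero] at H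
  rw [Finset.sum_eq_single_of_mem i₀ hi₀ ?_] at H
  · simpa using H
  · intro i _ hne
    have hz : b.coord i₀ (b i) = 0 := by
      rw [Module.Basis.coord_apply, Module.Basis.repr_self, Finsupp.single_eq_of_ne' hne]
    rw [hz, zero_smul]

theorem auxRepr (b : Module.Basis ι R A) {S : Type*} [CommRing S] [Algebra R S] (z : S ⊗[R] A) :
    z = ∑ i ∈ ((b.baseChange S).repr z).support, ((b.baseChange S).repr z) i ⊗ₜ[R] b i := by
  conv_lhs => rw [← (b.baseChange S).linearCombination_repr z]
  rw [Finsupp.linearCombination_apply, Finsupp.sum]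
  exact Finset.sum_congr rfl fun i _ => by
    rw [Module.Basis.baseChange_apply, TensorProduct.smul_tmul', smul_eq_mul, mul_one]

end aux

set_option maxHeartbeats 1600000 in
set_option synthInstance.maxHeartbeats 400000 in
theorem stmt6 (R : Type u) [CommRing R] [IsDomain R] [IsDiscreteValuationRing R]
    (F : Type v) [Field F] [Algebra R F] [IsFractionRing R F]
    (A : Type w) [Ring A] [Algebra R A] [Module.Free R A]
    (L : Type w) [Field L] [Algebra F L] [Algebra R L] [IsScalarTower R F L]
    (h : ∀ (K' : Type u) [Field K'] [Algebra R K']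
        [Algebra (IsLocalRing.ResidueField R) K']
        [IsScalarTower R (IsLocalRing.ResidueField R) K'],
      FiniteDimensional (IsLocalRing.ResidueField R) K' →
        NoZeroDivisors (K' ⊗[R] A)) :
    NoZeroDivisors (L ⊗[R] A) := by
  refine { eq_zero_or_eq_zero_of_mul_eq_zero := ?_ }
  intro x y hxy
  by_contra hc
  push_neg at hc
  obtain ⟨hx, hy⟩ := hc
  classical
  -- basis
  set ι := Module.Free.ChooseBasisIndex R A with hι
  set b : Module.Basis ι R A := Module.Free.chooseBasis R A with hb
  set bL : Module.Basis ι L (L ⊗[R] A) := b.baseChange L with hbL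
  -- valuation subring of L dominating R
  obtain ⟨O, hmem, hlocal⟩ := IsLocalRing.exists_factor_valuationRing (algebraMap R L)
  set f₀ : R →+* ↥O.toSubring := (algebraMap R L).codRestrict O.toSubring hmem with hf₀
  haveI : IsLocalHom f₀ := hlocal
  letI : Algebra R ↥O.toSubring := f₀.toAlgebra
  haveI : IsLocalRing ↥O.toSubring := inferInstanceAs (IsLocalRing ↥O)
  -- the inclusion as an R-algebra hom
  letI inclAlg : ↥O.toSubring →ₐ[R] L :=
    { toRingHom := O.toSubring.subtype, commutes' := fun r => rfl }
  have hincl_inj : Function.Injective inclAlg := Subtype.val_injective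
  -- coefficients of x and y
  set cx : ι → L := fun i => bL.repr x i with hcx
  set cy : ι → L := fun i => bL.repr y i with hcy
  set tx : Finset ι := (bL.repr x).support with htx
  set ty : Finset ι := (bL.repr y).support with hty
  have htxne : tx.Nonempty := by
    rw [htx, Finsupp.support_nonempty_iff]
    intro h0
    exact hx (by simpa using congrArg bL.repr.symm h0)
  have htyne : ty.Nonempty := by
    rw [hty, Finsupp.support_nonempty_iff]
    intro h0
    exact hy (by simpa using congrArg bL.repr.symm h0)
  obtain ⟨i₀, hi₀mem, hi₀max⟩ := tx.exists_max_image (fun i => O.valuation (cx i)) htxne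
  obtain ⟨j₀, hj₀mem, hj₀max⟩ := ty.exists_max_image (fun i => O.valuation (cy i)) htyne
  have hcxi₀ : cx i₀ ≠ 0 := Finsupp.mem_support_iff.mp hi₀mem
  have hcyj₀ : cy j₀ ≠ 0 := Finsupp.mem_support_iff.mp hj₀mem
  -- the scaled coefficients lie in O
  have hmemx : ∀ i, (cx i₀)⁻¹ * cx i ∈ O.toSubring := by
    intro i
    by_cases hi : i ∈ tx
    · show (cx i₀)⁻¹ * cx i ∈ O
      rw [← ValuationSubring.valuation_le_one_iff, map_mul, map_inv₀]
      calc (O.valuation (cx i₀))⁻¹ * O.valuation (cx i)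
          ≤ (O.valuation (cx i₀))⁻¹ * O.valuation (cx i₀) :=
            mul_le_mul_right (hi₀max i hi) _
        _ = 1 := inv_mul_cancel₀ ((O.valuation.ne_zero_iff).mpr hcxi₀)
    · have : cx i = 0 := by simpa [hcx, htx, Finsupp.mem_support_iff] using hi
      rw [this, mul_zero]; exact zero_mem _
  have hmemy : ∀ i, (cy j₀)⁻¹ * cy i ∈ O.toSubring := by
    intro i
    by_cases hi : i ∈ ty
    · show (cy j₀)⁻¹ * cy i ∈ O
      rw [← ValuationSubring.valuation_le_one_iff, map_mul, map_inv₀]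
      calc (O.valuation (cy j₀))⁻¹ * O.valuation (cy i)
          ≤ (O.valuation (cy j₀))⁻¹ * O.valuation (cy j₀) :=
            mul_le_mul_right (hj₀max i hi) _
        _ = 1 := inv_mul_cancel₀ ((O.valuation.ne_zero_iff).mpr hcyj₀)
    · have : cy i = 0 := by simpa [hcy, hty, Finsupp.mem_support_iff] using hi
      rw [this, mul_zero]; exact zero_mem _
  set cO : ι → ↥O.toSubring := fun i => ⟨(cx i₀)⁻¹ * cx i, hmemx i⟩ with hcO
  set dO : ι → ↥O.toSubring := fun i => ⟨(cy j₀)⁻¹ * cy i, hmemy i⟩ with hdO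
  have hcO1 : cO i₀ = 1 := Subtype.ext (inv_mul_cancel₀ hcxi₀)
  have hdO1 : dO j₀ = 1 := Subtype.ext (inv_mul_cancel₀ hcyj₀)
  set x' : ↥O.toSubring ⊗[R] A := ∑ i ∈ tx, cO i ⊗ₜ[R] b i with hx'
  set y' : ↥O.toSubring ⊗[R] A := ∑ i ∈ ty, dO i ⊗ₜ[R] b i with hy'
  -- expansions of x and y
  have hxsum : x = ∑ i ∈ tx, cx i ⊗ₜ[R] b i := auxRepr b x
  have hysum : y = ∑ i ∈ ty, cy i ⊗ₜ[R] b i := auxRepr b y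
  -- image of x' in L ⊗ A
  have hx'L : Algebra.TensorProduct.map inclAlg (AlgHom.id R A) x' = (cx i₀)⁻¹ • x := by
    rw [hx', auxMap, hxsum, Finset.smul_sum]
    exact Finset.sum_congr rfl fun i _ => by
      rw [TensorProduct.smul_tmul', smul_eq_mul]; rfl
  have hy'L : Algebra.TensorProduct.map inclAlg (AlgHom.id R A) y' = (cy j₀)⁻¹ • y := by
    rw [hy', auxMap, hysum, Finset.smul_sum]
    exact Finset.sum_congr rfl fun i _ => by
      rw [TensorProduct.smul_tmul', smul_eq_mul]; rfl
  -- product vanishes already over O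
  have hxy' : x' * y' = 0 := by
    apply auxInj inclAlg hincl_inj
    rw [map_mul, map_zero, hx'L, hy'L, smul_mul_assoc, mul_smul_comm, hxy, smul_zero, smul_zero]
  -- residue field of O
  set k := IsLocalRing.ResidueField ↥O.toSubring with hk
  letI : Algebra R k := ((IsLocalRing.residue ↥O.toSubring).comp f₀).toAlgebra
  letI : Module R k := Algebra.toModule
  letI resAlg : ↥O.toSubring →ₐ[R] k :=
    { toRingHom := IsLocalRing.residue ↥O.toSubring, commutes' := fun r => rfl }
  letI : Algebra (IsLocalRing.ResidueField R) k := (IsLocalRing.ResidueField.map f₀).toAlgebra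
  set cxk : ι → k := fun i => IsLocalRing.residue _ (cO i) with hcxk
  set cyk : ι → k := fun i => IsLocalRing.residue _ (dO i) with hcyk
  set xk : k ⊗[R] A := ∑ i ∈ tx, cxk i ⊗ₜ[R] b i with hxk'
  set yk : k ⊗[R] A := ∑ i ∈ ty, cyk i ⊗ₜ[R] b i with hyk'
  have hxk : Algebra.TensorProduct.map resAlg (AlgHom.id R A) x' = xk := by
    rw [hx', auxMap, hxk']
    exact Finset.sum_congr rfl fun i _ => rfl
  have hyk : Algebra.TensorProduct.map resAlg (AlgHom.id R A) y' = yk := by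
    rw [hy', auxMap, hyk']
    exact Finset.sum_congr rfl fun i _ => rfl
  have hxyk : xk * yk = 0 := by
    rw [← hxk, ← hyk, ← map_mul, hxy', map_zero]
  -- a finitely generated model over the residue field of R
  set s : Finset ι := tx ∪ ty with hs
  have htxs : tx ⊆ s := Finset.subset_union_left
  have htys : ty ⊆ s := Finset.subset_union_right
  set eqv := s.equivFin with heqv
  set u : Fin s.card × Bool → k := fun p =>
    if p.2 then cyk ((eqv.symm p.1 : ↥s) : ι) else cxk ((eqv.symm p.1 : ↥s) : ι) with hu
  set f : MvPolynomial (Fin s.card × Bool) (IsLocalRing.ResidueField R) →ₐ[IsLocalRing.ResidueField R] k :=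
    MvPolynomial.aeval u with hf
  set I : Ideal (MvPolynomial (Fin s.card × Bool) (IsLocalRing.ResidueField R)) :=
    RingHom.ker f.toRingHom with hI
  set B := MvPolynomial (Fin s.card × Bool) (IsLocalRing.ResidueField R) ⧸ I with hB
  set g₀ : B →+* k := RingHom.kerLift f.toRingHom with hg₀
  have hg₀inj : Function.Injective g₀ := RingHom.kerLift_injective _
  letI gAlg : B →ₐ[R] k :=
    { toRingHom := g₀
      commutes' := by
        intro r
        show g₀ (algebraMap R B r) = algebraMap R k r
        have h1 : algebraMap R B r
            = Ideal.Quotient.mk I (MvPolynomial.C (algebraMap R (IsLocalRing.ResidueField R) r)) :=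
          rfl
        have hker : ∀ p, g₀ (Ideal.Quotient.mk I p) = f p :=
          fun p => RingHom.kerLift_mk f.toRingHom p
        rw [h1, hker]
        simp only [hf, MvPolynomial.aeval_C]
        show IsLocalRing.ResidueField.map f₀ (IsLocalRing.residue R r)
          = IsLocalRing.residue _ (f₀ r)
        exact IsLocalRing.ResidueField.map_residue f₀ r }
  -- coefficients in B
  set cB : ι → B := fun i => if i = i₀ then 1 else
      (if hi : i ∈ s then Ideal.Quotient.mk I (MvPolynomial.X (eqv ⟨i, hi⟩, false)) else 0) with hcB
  set dB : ι → B := fun i => if i = j₀ then 1 else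
      (if hi : i ∈ s then Ideal.Quotient.mk I (MvPolynomial.X (eqv ⟨i, hi⟩, true)) else 0) with hdB
  have hker : ∀ p, g₀ (Ideal.Quotient.mk I p) = f p :=
    fun p => RingHom.kerLift_mk f.toRingHom p
  have hgc : ∀ i ∈ tx, gAlg (cB i) = cxk i := by
    intro i hi
    by_cases hii : i = i₀
    · subst hii
      have h1 : cB i = 1 := by simp [hcB]
      have h2 : cxk i = 1 := by simp only [hcxk]; rw [hcO1]; exact map_one _
      rw [h1, h2, map_one]
    · have his : i ∈ s := htxs hi
      have h1 : cB i = Ideal.Quotient.mk I (MvPolynomial.X (eqv ⟨i, his⟩, false)) := by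
        simp only [hcB]; rw [if_neg hii, dif_pos his]
      show g₀ (cB i) = cxk i
      rw [h1, hker]
      simp only [hf, MvPolynomial.aeval_X, hu]
      simp [Equiv.symm_apply_apply]
  have hgd : ∀ i ∈ ty, gAlg (dB i) = cyk i := by
    intro i hi
    by_cases hii : i = j₀
    · subst hii
      have h1 : dB i = 1 := by simp [hdB]
      have h2 : cyk i = 1 := by simp only [hcyk]; rw [hdO1]; exact map_one _
      rw [h1, h2, map_one]
    · have his : i ∈ s := htys hi
      have h1 : dB i = Ideal.Quotient.mk I (MvPolynomial.X (eqv ⟨i, his⟩, true)) := by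
        simp only [hdB]; rw [if_neg hii, dif_pos his]
      show g₀ (dB i) = cyk i
      rw [h1, hker]
      simp only [hf, MvPolynomial.aeval_X, hu]
      simp [Equiv.symm_apply_apply]
  set xB : B ⊗[R] A := ∑ i ∈ tx, cB i ⊗ₜ[R] b i with hxB
  set yB : B ⊗[R] A := ∑ i ∈ ty, dB i ⊗ₜ[R] b i with hyB
  have hgx : Algebra.TensorProduct.map gAlg (AlgHom.id R A) xB = xk := by
    rw [hxB, auxMap, hxk']
    exact Finset.sum_congr rfl fun i hi => by rw [hgc i hi]
  have hgy : Algebra.TensorProduct.map gAlg (AlgHom.id R A) yB = yk := by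
    rw [hyB, auxMap, hyk']
    exact Finset.sum_congr rfl fun i hi => by rw [hgd i hi]
  have hxyB : xB * yB = 0 := by
    apply auxInj gAlg hg₀inj
    rw [map_mul, hgx, hgy, hxyk, map_zero]
  -- pass to a finite extension of the residue field
  have hItop : I ≠ ⊤ := by
    intro htop
    have h1 : f.toRingHom 1 = 0 := by
      have : (1 : MvPolynomial (Fin s.card × Bool) (IsLocalRing.ResidueField R)) ∈ I := by
        rw [htop]; trivial
      rwa [hI, RingHom.mem_ker] at this
    rw [map_one] at h1
    exact one_ne_zero h1
  haveI : Nontrivial B := Ideal.Quotient.nontrivial_iff.mpr hItop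
  obtain ⟨m, hm⟩ := Ideal.exists_maximal B
  haveI := hm
  set K' := B ⧸ m with hK'
  letI : Field K' := Ideal.Quotient.field m
  haveI hftB : Algebra.FiniteType (IsLocalRing.ResidueField R) B :=
    Algebra.FiniteType.of_surjective
      (Ideal.Quotient.mkₐ (IsLocalRing.ResidueField R) I)
      (Ideal.Quotient.mkₐ_surjective (IsLocalRing.ResidueField R) I)
  haveI hftK' : Algebra.FiniteType (IsLocalRing.ResidueField R) K' :=
    Algebra.FiniteType.of_surjective
      (Ideal.Quotient.mkₐ (IsLocalRing.ResidueField R) m)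
      (Ideal.Quotient.mkₐ_surjective (IsLocalRing.ResidueField R) m)
  haveI hfin : Module.Finite (IsLocalRing.ResidueField R) K' :=
    finite_of_finite_type_of_isJacobsonRing (IsLocalRing.ResidueField R) K'
  haveI nzd : NoZeroDivisors (K' ⊗[R] A) := h K' hfin
  -- map everything down to K'
  set φ : B →ₐ[R] K' := Ideal.Quotient.mkₐ R m with hφ
  have hxyK : (∑ i ∈ tx, φ (cB i) ⊗ₜ[R] b i) * (∑ i ∈ ty, φ (dB i) ⊗ₜ[R] b i) = 0 := by
    rw [← auxMap φ tx cB b, ← auxMap φ ty dB b, ← map_mul, hxyB, map_zero]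
  rcases nzd.eq_zero_or_eq_zero_of_mul_eq_zero hxyK with h0 | h0
  · have hz := auxCoeff b tx (fun i => φ (cB i)) hi₀mem h0
    rw [hcB] at hz
    simp only [if_pos rfl, map_one] at hz
    exact one_ne_zero hz
  · have hz := auxCoeff b ty (fun i => φ (dB i)) hj₀mem h0
    rw [hdB] at hz
    simp only [if_pos rfl, map_one] at hz
    exact one_ne_zero hz
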